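/- Let m be a positive integer, p a prime, and α ≥ 1. Then there is a ring isomorphism ℤ[X]/(Φ_m(X), Φ_{m·p^α}(X)) ≅ 𝔽_p[X]/(Φ_m(X)), where on the right Φ_m(X) denotes the m-th cyclotomic polynomial over 𝔽_p = ℤ/pℤ. -/

import Mathlib

open Polynomial

/-- Over `ZMod p`, `Φ_m` divides `Φ_{m p^k}` for `k ≥ 1`. -/
lemma aux_dvd_cyclotomic (m p : ℕ) (hm : 0 < m) (hp : p.Prime) :
    ∀ k : ℕ, 1 ≤ k → cyclotomic m (ZMod p) ∣ cyclotomic (m * p ^ k) (ZMod p) := by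
  haveI : Fact p.Prime := ⟨hp⟩
  intro k hk
  induction k with
  | zero => omega
  | succ k ih =>
    rcases Nat.eq_zero_or_pos k with rfl | hk'
    · rw [pow_one]
      by_cases hdvd : p ∣ m
      · rw [cyclotomic_mul_prime_dvd_eq_pow (ZMod p) hdvd]
        exact dvd_pow_self _ hp.pos.ne'
      · rw [cyclotomic_mul_prime_eq_pow_of_not_dvd (ZMod p) hdvd]
        exact dvd_pow_self _ (Nat.sub_ne_zero_of_lt hp.one_lt)
    · have h1 : m * p ^ (k + 1) = (m * p ^ k) * p := by ring
      have h2 : p ∣ m * p ^ k := Dvd.dvd.mul_left (dvd_pow_self p hk'.ne') m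
      rw [h1, cyclotomic_mul_prime_dvd_eq_pow (ZMod p) h2]
      exact (ih hk').trans (dvd_pow_self _ hp.pos.ne')

/-- The key arithmetic fact: `p ∈ (Φ_m, Φ_{m p^α})` in `ℤ[X]`. -/
lemma aux_p_mem (m p : ℕ) (hm : 0 < m) (hp : p.Prime) (α : ℕ) (hα : 1 ≤ α) :
    (p : ℤ[X]) ∈ Ideal.span {cyclotomic m ℤ, cyclotomic (m * p ^ α) ℤ} := by
  obtain ⟨β, rfl⟩ : ∃ β, α = β + 1 := ⟨α - 1, by omega⟩
  set q : ℕ := m * p ^ β with hq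
  set n : ℕ := m * p ^ (β + 1) with hn
  have hqn : n = q * p := by rw [hq, hn]; ring
  have hq0 : 0 < q := Nat.mul_pos hm (Nat.pow_pos hp.pos)
  have hn0 : 0 < n := Nat.mul_pos hm (Nat.pow_pos hp.pos)
  have hqdvd : q ∣ n := ⟨p, hqn⟩
  have hqltn : q < n := by
    rw [hqn]
    exact lt_mul_of_one_lt_right hq0 hp.one_lt
  -- Ψ = 1 + X^q + ... + X^(q(p-1))
  set Ψ : ℤ[X] := ∑ i ∈ Finset.range p, (X ^ q) ^ i with hΨ
  -- X^n - 1 = Ψ * (X^q - 1)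
  have hfact : (X : ℤ[X]) ^ n - 1 = Ψ * (X ^ q - 1) := by
    rw [hΨ, geom_sum_mul, ← pow_mul, mul_comm q p, hqn, mul_comm q p]
  -- Φ_n * (X^q - 1) ∣ X^n - 1
  have hdvd1 : cyclotomic n ℤ * ((X : ℤ[X]) ^ q - 1) ∣ (X : ℤ[X]) ^ n - 1 := by
    rw [← prod_cyclotomic_eq_X_pow_sub_one hn0 ℤ, ← prod_cyclotomic_eq_X_pow_sub_one hq0 ℤ]
    have hsub : insert n q.divisors ⊆ n.divisors := by
      apply Finset.insert_subset (Nat.mem_divisors_self n hn0.ne')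
      exact Nat.divisors_subset_of_dvd hn0.ne' hqdvd
    have hnotmem : n ∉ q.divisors := fun h => absurd (Nat.divisor_le h) (by omega)
    calc cyclotomic n ℤ * ∏ i ∈ q.divisors, cyclotomic i ℤ
        = ∏ i ∈ insert n q.divisors, cyclotomic i ℤ := (Finset.prod_insert (f := fun i => cyclotomic i ℤ) hnotmem).symm
      _ ∣ ∏ i ∈ n.divisors, cyclotomic i ℤ := Finset.prod_dvd_prod_of_subset _ _ _ hsub
  -- Φ_n ∣ Ψ
  have hXq_ne : (X : ℤ[X]) ^ q - 1 ≠ 0 := by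
    have := X_pow_sub_C_ne_zero (R := ℤ) hq0 1
    simpa using this
  have hdvd2 : cyclotomic n ℤ ∣ Ψ := by
    rw [hfact] at hdvd1
    exact (mul_dvd_mul_iff_right hXq_ne).mp hdvd1
  -- X^m - 1 ∣ Ψ - p
  have hdvd3 : (X : ℤ[X]) ^ m - 1 ∣ Ψ - (p : ℤ[X]) := by
    have : Ψ - (p : ℤ[X]) = ∑ i ∈ Finset.range p, (((X : ℤ[X]) ^ m) ^ (p ^ β * i) - 1) := by
      rw [Finset.sum_sub_distrib, Finset.sum_const, Finset.card_range]
      congr 1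
      · apply Finset.sum_congr rfl
        intro i _
        rw [← pow_mul, ← pow_mul, hq]; ring_nf
      · simp [mul_comm]
    rw [this]
    apply Finset.dvd_sum
    intro i _
    simpa using sub_dvd_pow_sub_pow ((X : ℤ[X]) ^ m) 1 (p ^ β * i)
  -- Φ_m ∣ X^m - 1
  have hdvd4 : cyclotomic m ℤ ∣ (X : ℤ[X]) ^ m - 1 := cyclotomic.dvd_X_pow_sub_one m ℤ
  obtain ⟨T, hT⟩ := hdvd2
  obtain ⟨S, hS⟩ := hdvd4.trans hdvd3
  rw [Ideal.mem_span_pair]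
  exact ⟨-S, T, by linear_combination hS - hT⟩

/-- For `m ≥ 1`, `p` prime and `α ≥ 1`, there is a ring isomorphism
`ℤ[X]/(Φ_m, Φ_{m·p^α}) ≃ 𝔽_p[X]/(Φ_m)`. -/
theorem stmt2 (m : ℕ) (hm : 0 < m) (p : ℕ) (hp : p.Prime) (α : ℕ) (hα : 1 ≤ α) :
    Nonempty ((ℤ[X] ⧸ Ideal.span {cyclotomic m ℤ, cyclotomic (m * p ^ α) ℤ}) ≃+*
      ((ZMod p)[X] ⧸ Ideal.span {cyclotomic m (ZMod p)})) := by
  set I : Ideal ℤ[X] := Ideal.span {cyclotomic m ℤ, cyclotomic (m * p ^ α) ℤ} with hI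
  set φ : ℤ[X] →+* (ZMod p)[X] ⧸ Ideal.span {cyclotomic m (ZMod p)} :=
    (Ideal.Quotient.mk (Ideal.span {cyclotomic m (ZMod p)})).comp
      (mapRingHom (Int.castRingHom (ZMod p))) with hφ
  have hsurj : Function.Surjective φ :=
    Ideal.Quotient.mk_surjective.comp (Polynomial.map_surjective (Int.castRingHom (ZMod p)) ZMod.intCast_surjective)
  have hker : RingHom.ker φ = I := by
    apply le_antisymm
    · -- ker φ ⊆ I
      intro f hf
      rw [RingHom.mem_ker, hφ, RingHom.comp_apply, Ideal.Quotient.eq_zero_iff_mem,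
        Ideal.mem_span_singleton] at hf
      obtain ⟨g, hg⟩ := hf
      obtain ⟨g', hg'⟩ := Polynomial.map_surjective (Int.castRingHom (ZMod p)) ZMod.intCast_surjective g
      have hmap : (f - cyclotomic m ℤ * g').map (Int.castRingHom (ZMod p)) = 0 := by
        rw [Polynomial.map_sub, Polynomial.map_mul, map_cyclotomic, hg', ← hg, coe_mapRingHom]
        ring
      have hmem : f - cyclotomic m ℤ * g' ∈ RingHom.ker (mapRingHom (Int.castRingHom (ZMod p))) :=
        hmap
      rw [Polynomial.ker_mapRingHom, ZMod.ker_intCastRingHom, Ideal.map_span] at hmem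
      simp only [Set.image_singleton, map_intCast] at hmem
      rw [Ideal.mem_span_singleton] at hmem
      obtain ⟨h, hh⟩ := hmem
      rw [map_natCast (C : ℤ →+* ℤ[X])] at hh
      have hfeq : f = cyclotomic m ℤ * g' + (p : ℤ[X]) * h := by linear_combination hh
      rw [hfeq]
      apply Ideal.add_mem
      · exact Ideal.mul_mem_right _ _ (Ideal.subset_span (by simp))
      · exact Ideal.mul_mem_right _ _ (aux_p_mem m p hm hp α hα)
    · -- I ⊆ ker φ
      rw [hI, Ideal.span_le]
      rintro f (rfl | rfl)
      · rw [SetLike.mem_coe, RingHom.mem_ker, hφ, RingHom.comp_apply,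
          Ideal.Quotient.eq_zero_iff_mem]
        simp only [coe_mapRingHom, map_cyclotomic]
        exact Ideal.subset_span rfl
      · rw [SetLike.mem_coe, RingHom.mem_ker, hφ, RingHom.comp_apply,
          Ideal.Quotient.eq_zero_iff_mem]
        simp only [coe_mapRingHom, map_cyclotomic]
        rw [Ideal.mem_span_singleton]
        exact aux_dvd_cyclotomic m p hm hp α hα
  exact ⟨(Ideal.quotEquivOfEq hker.symm).trans (RingHom.quotientKerEquivOfSurjective hsurj)⟩
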